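/- Let R(u) = (1/p)‖u‖^p_X with 1 < p < ∞ and q = p/(p−1), and suppose the distance function decays polynomially: d_ρ(μ†) = inf{ ‖K*w − μ†‖_{X*} : w ∈ Y, ‖w‖_Y ≤ ρ } ≤ ρ^{−k} for all ρ > 0, with some k > 0. Then there is a constant C > 0 (depending only on k, q) such that e_{α,ζ}(μ†) ≤ C α^{kq/(kq+2)} ζ^{−2(q−1)/(kq+2)} for all α, ζ > 0, where e_{α,ζ}(μ†) = inf_{w∈Y}[ (1/(q ζ^{q−1}))‖K*w − μ†‖^q_{X*} + (α/2)‖w‖²_Y ]. -/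
import Mathlib


open scoped RealInnerProductSpace

/-- Remark 3.12: polynomial decay of the distance function
`d_ρ(μ†) = inf{‖K*w − μ†‖ : ‖w‖ ≤ ρ} ≤ ρ^{−k}` implies the bound
`e_{α,ζ}(μ†) = inf_w [(1/(qζ^{q−1}))‖K*w − μ†‖^q + (α/2)‖w‖²]
  ≤ C α^{kq/(kq+2)} ζ^{−2(q−1)/(kq+2)}` with `C = C(k,q)`. Here `K : X → Y` is
bounded linear into a Hilbert space and `K*w = (u ↦ ⟪w, Ku⟫)`. -/
theorem stmt14
    {X Y : Type*} [NormedAddCommGroup X] [NormedSpace ℝ X]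
    [NormedAddCommGroup Y] [InnerProductSpace ℝ Y]
    (K : X →L[ℝ] Y) (μdag : X →L[ℝ] ℝ)
    (p q k : ℝ) (hp : 1 < p) (hq : q = p / (p - 1)) (hk : 0 < k)
    -- polynomial decay of the distance function
    (hdist : ∀ ρ : ℝ, 0 < ρ →
      sInf {r : ℝ | ∃ w : Y, ‖w‖ ≤ ρ ∧ r = ‖(innerSL ℝ w).comp K - μdag‖}
        ≤ ρ ^ (-k)) :
    ∃ C : ℝ, 0 < C ∧ ∀ α ζ : ℝ, 0 < α → 0 < ζ →
      (⨅ w : Y, (1 / (q * ζ ^ (q - 1)) * ‖(innerSL ℝ w).comp K - μdag‖ ^ q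
          + α / 2 * ‖w‖ ^ 2))
        ≤ C * α ^ (k * q / (k * q + 2)) * ζ ^ (-(2 * (q - 1) / (k * q + 2))) := by
  have hp0 : 0 < p - 1 := by linarith
  have hq1 : 1 < q := by
    rw [hq, lt_div_iff₀ hp0]; linarith
  have hq0 : 0 < q := by linarith
  have hθ : 0 < k * q + 2 := by positivity
  refine ⟨2 ^ q / q + 1 / 2, by positivity, ?_⟩
  intro α ζ hα hζ
  set A := α * ζ ^ (q - 1) with hAdef
  have hζq : (0:ℝ) < ζ ^ (q - 1) := Real.rpow_pos_of_pos hζ _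
  have hA : 0 < A := by positivity
  set ρ := A ^ (-(1 / (k * q + 2))) with hρdef
  have hρ : 0 < ρ := Real.rpow_pos_of_pos hA _
  have hρk : 0 < ρ ^ (-k) := Real.rpow_pos_of_pos hρ _
  -- pick a near-optimal w at radius ρ
  have hne : {r : ℝ | ∃ w : Y, ‖w‖ ≤ ρ ∧ r = ‖(innerSL ℝ w).comp K - μdag‖}.Nonempty := by
    exact ⟨_, 0, by simpa using hρ.le, rfl⟩
  obtain ⟨r, ⟨w, hw, rfl⟩, hr⟩ := Real.lt_sInf_add_pos hne hρk
  have hnorm : ‖(innerSL ℝ w).comp K - μdag‖ ≤ 2 * ρ ^ (-k) := by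
    have := hdist ρ hρ
    nlinarith [hr]
  -- bound the infimum by the value at w
  have hbdd : BddBelow (Set.range fun w : Y =>
      1 / (q * ζ ^ (q - 1)) * ‖(innerSL ℝ w).comp K - μdag‖ ^ q + α / 2 * ‖w‖ ^ 2) := by
    refine ⟨0, ?_⟩
    rintro x ⟨v, rfl⟩
    have h1 : (0:ℝ) ≤ ‖(innerSL ℝ v).comp K - μdag‖ ^ q :=
      Real.rpow_nonneg (norm_nonneg _) _
    positivity
  have hle1 : (⨅ w : Y, (1 / (q * ζ ^ (q - 1)) * ‖(innerSL ℝ w).comp K - μdag‖ ^ q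
          + α / 2 * ‖w‖ ^ 2))
      ≤ 1 / (q * ζ ^ (q - 1)) * (2 * ρ ^ (-k)) ^ q + α / 2 * ρ ^ 2 := by
    refine le_trans (ciInf_le hbdd w) ?_
    have h1 : ‖(innerSL ℝ w).comp K - μdag‖ ^ q ≤ (2 * ρ ^ (-k)) ^ q :=
      Real.rpow_le_rpow (norm_nonneg _) hnorm hq0.le
    have h2 : ‖w‖ ^ 2 ≤ ρ ^ 2 := by nlinarith [norm_nonneg w]
    have h3 : (0:ℝ) ≤ 1 / (q * ζ ^ (q - 1)) := by positivity
    nlinarith [hα]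
  refine hle1.trans_eq ?_
  -- now the algebraic identity
  have ht1 : 1 / (q * ζ ^ (q - 1)) * (2 * ρ ^ (-k)) ^ q
      = 2 ^ q / q * α ^ (k * q / (k * q + 2)) * ζ ^ (-(2 * (q - 1) / (k * q + 2))) := by
    have hL : (0:ℝ) < 1 / (q * ζ ^ (q - 1)) * (2 * ρ ^ (-k)) ^ q := by
      have : (0:ℝ) < (2 * ρ ^ (-k)) ^ q := Real.rpow_pos_of_pos (by positivity) _
      positivity
    have h2q : (0:ℝ) < (2:ℝ) ^ q := Real.rpow_pos_of_pos (by norm_num) _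
    have hR : (0:ℝ) < 2 ^ q / q * α ^ (k * q / (k * q + 2)) * ζ ^ (-(2 * (q - 1) / (k * q + 2))) := by
      positivity
    refine Real.log_injOn_pos (Set.mem_Ioi.2 hL) (Set.mem_Ioi.2 hR) ?_
    have hlhs : Real.log (1 / (q * ζ ^ (q - 1)) * (2 * ρ ^ (-k)) ^ q)
        = -(Real.log q + (q - 1) * Real.log ζ)
          + q * (Real.log 2 + (-k) * ((-(1 / (k * q + 2))) * (Real.log α + (q - 1) * Real.log ζ))) := by
      rw [hρdef, hAdef,
          Real.log_mul (by positivity) (Real.rpow_pos_of_pos (by positivity) _).ne',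
          Real.log_div one_ne_zero (by positivity), Real.log_one,
          Real.log_mul hq0.ne' hζq.ne', Real.log_rpow hζ,
          Real.log_rpow (by positivity),
          Real.log_mul two_ne_zero (by positivity),
          Real.log_rpow (Real.rpow_pos_of_pos hA _),
          Real.log_rpow hA, Real.log_mul hα.ne' hζq.ne', Real.log_rpow hζ]
      ring
    have hrhs : Real.log (2 ^ q / q * α ^ (k * q / (k * q + 2)) * ζ ^ (-(2 * (q - 1) / (k * q + 2))))
        = q * Real.log 2 - Real.log q + (k * q / (k * q + 2)) * Real.log α
          + (-(2 * (q - 1) / (k * q + 2))) * Real.log ζ := by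
      rw [Real.log_mul (by positivity) (Real.rpow_pos_of_pos hζ _).ne',
          Real.log_mul (by positivity) (Real.rpow_pos_of_pos hα _).ne',
          Real.log_div h2q.ne' hq0.ne', Real.log_rpow (by norm_num : (0:ℝ) < 2),
          Real.log_rpow hα, Real.log_rpow hζ]
    rw [hlhs, hrhs]
    field_simp
    ring
  have ht2 : α / 2 * ρ ^ 2
      = 1 / 2 * α ^ (k * q / (k * q + 2)) * ζ ^ (-(2 * (q - 1) / (k * q + 2))) := by
    have hL : (0:ℝ) < α / 2 * ρ ^ 2 := by positivity
    have hR : (0:ℝ) < 1 / 2 * α ^ (k * q / (k * q + 2)) * ζ ^ (-(2 * (q - 1) / (k * q + 2))) := by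
      positivity
    refine Real.log_injOn_pos (Set.mem_Ioi.2 hL) (Set.mem_Ioi.2 hR) ?_
    have hlhs : Real.log (α / 2 * ρ ^ 2)
        = Real.log α - Real.log 2
          + 2 * ((-(1 / (k * q + 2))) * (Real.log α + (q - 1) * Real.log ζ)) := by
      rw [hρdef, hAdef, Real.log_mul (by positivity) (by positivity),
          Real.log_div hα.ne' two_ne_zero, Real.log_pow,
          Real.log_rpow hA, Real.log_mul hα.ne' hζq.ne', Real.log_rpow hζ]
      push_cast
      ring
    have hrhs : Real.log (1 / 2 * α ^ (k * q / (k * q + 2)) * ζ ^ (-(2 * (q - 1) / (k * q + 2))))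
        = -Real.log 2 + (k * q / (k * q + 2)) * Real.log α
          + (-(2 * (q - 1) / (k * q + 2))) * Real.log ζ := by
      rw [Real.log_mul (by positivity) (Real.rpow_pos_of_pos hζ _).ne',
          Real.log_mul (by norm_num) (Real.rpow_pos_of_pos hα _).ne',
          Real.log_div one_ne_zero two_ne_zero, Real.log_one,
          Real.log_rpow hα, Real.log_rpow hζ]
      ring
    rw [hlhs, hrhs]
    field_simp
    ring
  rw [ht1, ht2]
  ring
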